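/- Let m be a positive integer and let a, b, c be real numbers such that none of a, b, c, a−c, b−c, a+b−c is an integer. Then Σ_{k=0}^{m} [(−m)_k (a)_k (b)_k] / [(c)_k (a+b−m−c+2)_k · k!] = [Γ(a+b−m−c+2)·Γ(m−1−b+c)·Γ(1−c+a)·Γ(c)] / [Γ(2−m−c+a)·Γ(b−c+a+2)·Γ(m+c)·Γ(c−b)] · (−c² + (−m+b+a+2)·c − (1−m+b)·a + (m−1)·(b+1)). -/

import Mathlib

open scoped BigOperators
open Finset

/-- Pochhammer (ascending factorial) `(x)_k = x (x+1) ⋯ (x+k-1)`. -/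
noncomputable def poch (x : ℝ) (k : ℕ) : ℝ := Polynomial.eval x (ascPochhammer ℝ k)


lemma poch_zero (x : ℝ) : poch x 0 = 1 := by simp [poch]

lemma poch_succ (x : ℝ) (n : ℕ) : poch x (n + 1) = poch x n * (x + n) := by
  simp [poch, ascPochhammer_succ_right]

lemma poch_prod (x : ℝ) (n : ℕ) : poch x n = ∏ i ∈ range n, (x + i) := by
  induction n with
  | zero => simp [poch_zero]
  | succ n ih => rw [poch_succ, ih, prod_range_succ]

lemma poch_succ_left (x : ℝ) (n : ℕ) : poch x (n + 1) = x * poch (x + 1) n := by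
  rw [poch_prod, poch_prod, prod_range_succ']
  simp only [Nat.cast_zero, add_zero]
  rw [mul_comm]
  congr 1
  apply prod_congr rfl
  intro i _
  push_cast
  ring

lemma poch_add (x : ℝ) (m n : ℕ) : poch x (m + n) = poch x m * poch (x + m) n := by
  rw [poch_prod, poch_prod, poch_prod, prod_range_add]
  congr 1
  apply prod_congr rfl
  intro i _
  push_cast
  ring

lemma poch_ne_zero {x : ℝ} (hx : ∀ z : ℤ, x ≠ (z : ℝ)) (n : ℕ) : poch x n ≠ 0 := by
  rw [poch_prod]
  apply prod_ne_zero_iff.2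
  intro i _
  intro h
  exact hx (-(i : ℤ)) (by push_cast; linarith)

lemma poch_reflect (x : ℝ) (n : ℕ) : poch x n = (-1) ^ n * poch (1 - n - x) n := by
  rw [poch_prod, poch_prod, ← prod_range_reflect (fun i => x + (i:ℝ)) n]
  rw [show ((-1 : ℝ)) ^ n = ∏ _i ∈ range n, (-1 : ℝ) by simp, ← prod_mul_distrib]
  apply prod_congr rfl
  intro i hi
  rw [mem_range] at hi
  have : ((n - 1 - i : ℕ) : ℝ) = (n : ℝ) - 1 - i := by
    have h1 : i + 1 ≤ n := hi
    push_cast [Nat.cast_sub (by omega : 1 + i ≤ n), Nat.sub_sub]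
    ring
  rw [this]
  ring

lemma poch_congr {x y : ℝ} (h : x = y) (n : ℕ) : poch x n = poch y n := by rw [h]

lemma poch_neg_nat (m k : ℕ) (h : k ≤ m) :
    poch (-(m : ℝ)) k = (-1) ^ k * (m.choose k : ℝ) * (k.factorial : ℝ) := by
  have key : ∀ k, k ≤ m → poch (-(m : ℝ)) k * ((m - k).factorial : ℝ) = (-1) ^ k * (m.factorial : ℝ) := by
    intro k
    induction k with
    | zero => simp [poch_zero]
    | succ k ih =>
      intro hk
      have hk' : k ≤ m := by omega
      have hmk : ((m - k : ℕ) : ℝ) = (m : ℝ) - k := by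
        push_cast [Nat.cast_sub hk']; ring
      have hmk1 : m - k = (m - (k+1)) + 1 := by omega
      have hfac : ((m - k).factorial : ℝ) = ((m - (k+1)).factorial : ℝ) * ((m : ℝ) - k) := by
        rw [hmk1, Nat.factorial_succ]
        push_cast
        rw [show ((m - (k+1) : ℕ) : ℝ) = (m : ℝ) - (k+1) by push_cast [Nat.cast_sub hk]; ring]
        ring
      have hne : (m : ℝ) - k ≠ 0 := by
        have : (k : ℝ) < m := by exact_mod_cast (by omega : k < m)
        linarith
      have := ih hk'
      apply mul_left_cancel₀ hne
      rw [poch_succ]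
      calc ((m:ℝ) - k) * (poch (-(m:ℝ)) k * (-(m:ℝ) + k) * ((m - (k+1)).factorial : ℝ))
          = (poch (-(m:ℝ)) k * ((m-k).factorial : ℝ)) * (-((m:ℝ) - k)) := by rw [hfac]; ring
        _ = (-1)^k * (m.factorial : ℝ) * (-((m:ℝ)-k)) := by rw [this]
        _ = ((m:ℝ) - k) * ((-1)^(k+1) * (m.factorial:ℝ)) := by ring
  have h2 := key k h
  have h3 : (m.choose k : ℝ) * (k.factorial : ℝ) * ((m-k).factorial : ℝ) = (m.factorial : ℝ) := by
    exact_mod_cast congrArg (Nat.cast : ℕ → ℝ) (Nat.choose_mul_factorial_mul_factorial h)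
  have hne : ((m - k).factorial : ℝ) ≠ 0 := by positivity
  apply mul_right_cancel₀ hne
  rw [h2, ← h3]
  ring

lemma gamma_poch {x : ℝ} (hx : ∀ z : ℤ, x ≠ (z : ℝ)) (n : ℕ) :
    Real.Gamma (x + n) = poch x n * Real.Gamma x := by
  induction n with
  | zero => simp [poch_zero]
  | succ n ih =>
    have h0 : x + n ≠ 0 := by
      intro h
      exact hx (-(n:ℤ)) (by push_cast; linarith)
    rw [show x + ((n:ℕ)+1 : ℕ) = (x + n) + 1 by push_cast; ring, Real.Gamma_add_one h0, ih, poch_succ]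
    ring

lemma gamma_ne_zero {x : ℝ} (hx : ∀ z : ℤ, x ≠ (z : ℝ)) : Real.Gamma x ≠ 0 := by
  apply Real.Gamma_ne_zero
  intro n h
  exact hx (-(n:ℤ)) (by push_cast; linarith)

noncomputable def U (a b c : ℝ) (m k : ℕ) : ℝ :=
  (-1) ^ k * (m.choose k : ℝ) * poch a k * poch b k *
    poch (c + k) (m - k) * poch (a + b - c + 1 - m + k) (m - k)

lemma saal_step (a b c : ℝ) (hc : ∀ z : ℤ, c ≠ (z : ℝ)) (m k : ℕ) (hk : k ≤ m + 1) :
    ((m : ℝ) + 1) * ((m : ℝ) + c) *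
      (U a b c (m+1) k + (c - a + m) * (c - b + m) * U a b c m k)
    = (k : ℝ) * ((k : ℝ) - 1 + c) * U a b c (m+1) k
      - ((k : ℝ) + 1) * ((k : ℝ) + c) * U a b c (m+1) (k+1) := by
  rcases Nat.lt_or_ge k (m+1) with hlt | hge
  · -- k ≤ m
    have hkm : k ≤ m := by omega
    obtain ⟨j, rfl⟩ := Nat.exists_eq_add_of_le hkm
    simp only [U]
    rw [show k + j + 1 - k = j + 1 from by omega, show k + j - k = j from by omega,
        show k + j + 1 - (k + 1) = j from by omega]
    -- choose facts
    have hx2 : (((k+j+1).choose (k+1) : ℕ) : ℝ) * ((k:ℝ)+1) = (((k+j).choose k : ℕ) : ℝ) * ((k:ℝ)+(j:ℝ)+1) := by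
      have h := congrArg (Nat.cast : ℕ → ℝ) (Nat.add_one_mul_choose_eq (k+j) k)
      push_cast at h
      linarith
    have hx3 : (((k+j+1).choose k : ℕ) : ℝ) * ((j:ℝ)+1) = (((k+j).choose k : ℕ) : ℝ) * ((k:ℝ)+(j:ℝ)+1) := by
      have h1 := Nat.add_one_mul_choose_eq (k+j) j
      have h2 : (k+j).choose j = (k+j).choose k := by
        rw [← Nat.choose_symm (by omega : j ≤ k + j)]
        congr 1
        omega
      have h3 : (k+j+1).choose (j+1) = (k+j+1).choose k := by
        rw [← Nat.choose_symm (by omega : j + 1 ≤ k + j + 1)]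
        congr 1
        omega
      rw [h2, h3] at h1
      have h := congrArg (Nat.cast : ℕ → ℝ) h1
      push_cast at h
      linarith
    -- poch rewrites
    rw [poch_succ a k, poch_succ b k]
    rw [poch_succ_left (c + (k:ℝ)) j]
    rw [poch_congr (show a + b - c + 1 - ((k:ℕ)+(j:ℕ)+1 : ℕ) + (k:ℝ) = a + b - c - (j:ℝ) from by push_cast; ring) (j+1)]
    rw [poch_succ_left (a + b - c - (j:ℝ)) j]
    rw [poch_congr (show a + b - c + 1 - ((k:ℕ)+(j:ℕ) : ℕ) + (k:ℝ) = a + b - c + 1 - (j:ℝ) from by push_cast; ring) j]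
    rw [poch_congr (show a + b - c + 1 - ((k:ℕ)+(j:ℕ)+1 : ℕ) + ((k+1 : ℕ):ℝ) = a + b - c + 1 - (j:ℝ) from by push_cast; ring) j]
    rw [poch_congr (show a + b - c - (j:ℝ) + 1 = a + b - c + 1 - (j:ℝ) from by ring) j]
    rw [poch_congr (show c + ((k+1 : ℕ):ℝ) = c + (k:ℝ) + 1 from by push_cast; ring) j]
    -- relation between poch (c+k) j and poch (c+k+1) j
    have h1 : poch (c + (k:ℝ)) j * (c + k + j) = (c + (k:ℝ)) * poch (c + (k:ℝ) + 1) j := by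
      rw [← poch_succ, ← poch_succ_left]
    have hck : c + (k:ℝ) ≠ 0 := fun h => hc (-(k:ℤ)) (by push_cast; linarith)
    have hC1 : poch (c + (k:ℝ) + 1) j = poch (c + (k:ℝ)) j * (c + k + j) / (c + (k:ℝ)) := by
      field_simp
      linarith [h1]
    rw [hC1]
    have hz : (((k+j+1).choose (k+1) : ℕ) : ℝ) = (((k+j).choose k : ℕ) : ℝ) * ((k:ℝ)+(j:ℝ)+1) / ((k:ℝ)+1) := by
      field_simp
      linarith [hx2]
    have hy : (((k+j+1).choose k : ℕ) : ℝ) = (((k+j).choose k : ℕ) : ℝ) * ((k:ℝ)+(j:ℝ)+1) / ((j:ℝ)+1) := by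
      field_simp
      linarith [hx3]
    rw [hz, hy]
    have hkn : ((k:ℝ)+1) ≠ 0 := by positivity
    have hjn : ((j:ℝ)+1) ≠ 0 := by positivity
    push_cast
    field_simp
    ring
  · -- k = m + 1
    have hke : k = m + 1 := by omega
    subst hke
    simp only [U]
    rw [show m + 1 - (m+1) = 0 from by omega, show m - (m+1) = 0 from by omega,
        show m + 1 - (m + 1 + 1) = 0 from by omega]
    rw [Nat.choose_succ_self, Nat.choose_succ_self]
    simp only [poch_zero, Nat.cast_zero, zero_mul, mul_zero, mul_one]
    push_cast
    ring

lemma saal_cleared (a b c : ℝ) (hc : ∀ z : ℤ, c ≠ (z : ℝ)) :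
    ∀ m : ℕ, ∑ k ∈ range (m+1), U a b c m k = (-1) ^ m * poch (c - a) m * poch (c - b) m := by
  intro m
  induction m with
  | zero => simp [U, poch_zero]
  | succ m ih =>
    have hU0 : U a b c (m+1) (m+2) = 0 := by
      have h0 : (m+1).choose (m+2) = 0 := Nat.choose_eq_zero_of_lt (by omega)
      simp [U, h0]
    have hUm : U a b c m (m+1) = 0 := by
      have h0 : m.choose (m+1) = 0 := Nat.choose_eq_zero_of_lt (by omega)
      simp [U, h0]
    have key : ∑ k ∈ range (m+2),
        (((m : ℝ) + 1) * ((m : ℝ) + c) *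
          (U a b c (m+1) k + (c - a + m) * (c - b + m) * U a b c m k))
        = ∑ k ∈ range (m+2), ((fun i : ℕ => (i : ℝ) * ((i : ℝ) - 1 + c) * U a b c (m+1) i) k
            - (fun i : ℕ => (i : ℝ) * ((i : ℝ) - 1 + c) * U a b c (m+1) i) (k+1)) := by
      apply sum_congr rfl
      intro k hk
      rw [mem_range] at hk
      have h := saal_step a b c hc m k (by omega)
      simp only
      push_cast
      push_cast at h
      linarith
    rw [sum_range_sub' (fun i : ℕ => (i : ℝ) * ((i : ℝ) - 1 + c) * U a b c (m+1) i) (m+2)] at key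
    simp only [hU0, Nat.cast_zero, zero_mul, mul_zero, sub_zero] at key
    have key2 : ∑ k ∈ range (m+2),
        (((m : ℝ) + 1) * ((m : ℝ) + c) *
          (U a b c (m+1) k + (c - a + m) * (c - b + m) * U a b c m k))
        = ((m : ℝ) + 1) * ((m : ℝ) + c) *
          ((∑ k ∈ range (m+2), U a b c (m+1) k)
            + (c - a + m) * (c - b + m) * (∑ k ∈ range (m+2), U a b c m k)) := by
      calc ∑ k ∈ range (m+2),
            (((m : ℝ) + 1) * ((m : ℝ) + c) *
              (U a b c (m+1) k + (c - a + m) * (c - b + m) * U a b c m k))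
          = (∑ k ∈ range (m+2), ((m : ℝ) + 1) * ((m : ℝ) + c) * U a b c (m+1) k)
            + ∑ k ∈ range (m+2), ((m : ℝ) + 1) * ((m : ℝ) + c) * ((c - a + m) * (c - b + m) * U a b c m k) := by
            rw [← sum_add_distrib]
            apply sum_congr rfl
            intro k _
            ring
        _ = _ := by
            rw [← mul_sum, ← mul_sum, ← mul_add, ← mul_sum]
    rw [key2] at key
    have hsplit : ∑ k ∈ range (m+2), U a b c m k = ∑ k ∈ range (m+1), U a b c m k := by
      rw [sum_range_succ, hUm, add_zero]
    rw [hsplit, ih] at key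
    have hm1 : ((m : ℝ) + 1) ≠ 0 := by positivity
    have hmc : ((m : ℝ) + c) ≠ 0 := by
      intro h
      exact hc (-(m : ℤ)) (by push_cast; linarith)
    have key3 : (∑ k ∈ range (m+2), U a b c (m+1) k)
        + (c - a + m) * (c - b + m) * ((-1) ^ m * poch (c - a) m * poch (c - b) m) = 0 := by
      have := mul_eq_zero.mp key
      rcases this with h | h
      · exact absurd h (mul_ne_zero hm1 hmc)
      · exact h
    rw [poch_succ (c - a) m, poch_succ (c - b) m]
    have : (m + 1 + 1) = (m + 2) := by omega
    rw [this]
    rw [show ((-1 : ℝ)) ^ (m+1) = -(-1)^m from by ring]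
    linarith [key3, sq_nonneg (0:ℝ)]

lemma saal_div (a b c : ℝ) (hc : ∀ z : ℤ, c ≠ (z : ℝ)) (he : ∀ z : ℤ, a + b - c ≠ (z : ℝ)) (m : ℕ) :
    ∑ k ∈ range (m+1),
        poch (-(m : ℝ)) k * poch a k * poch b k /
          (poch c k * poch (a + b - c + 1 - m) k * (k.factorial : ℝ))
      = (-1) ^ m * poch (c - a) m * poch (c - b) m /
          (poch c m * poch (a + b - c + 1 - m) m) := by
  have he' : ∀ z : ℤ, a + b - c + 1 - (m : ℝ) ≠ (z : ℝ) := by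
    intro z h
    exact he (z - 1 + m) (by push_cast; linarith)
  have hcm : poch c m ≠ 0 := poch_ne_zero hc m
  have hem : poch (a + b - c + 1 - (m : ℝ)) m ≠ 0 := poch_ne_zero he' m
  rw [← saal_cleared a b c hc m]
  rw [sum_div]
  apply sum_congr rfl
  intro k hk
  rw [mem_range] at hk
  have hkm : k ≤ m := by omega
  obtain ⟨j, rfl⟩ := Nat.exists_eq_add_of_le hkm
  have hsub : k + j - k = j := by omega
  simp only [U, hsub]
  rw [poch_neg_nat (k+j) k (by omega)]
  have hsplitc : poch c (k + j) = poch c k * poch (c + k) j := poch_add c k j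
  have hsplite : poch (a + b - c + 1 - ((k+j : ℕ) : ℝ)) (k + j)
      = poch (a + b - c + 1 - ((k+j : ℕ) : ℝ)) k * poch (a + b - c + 1 - ((k+j : ℕ) : ℝ) + k) j :=
    poch_add _ k j
  have hck : poch c k ≠ 0 := poch_ne_zero hc k
  have hek : poch (a + b - c + 1 - ((k+j : ℕ) : ℝ)) k ≠ 0 := poch_ne_zero he' k
  have hfk : (k.factorial : ℝ) ≠ 0 := by positivity
  have hcj : poch (c + (k:ℝ)) j ≠ 0 :=
    poch_ne_zero (fun z h => hc (z - k) (by push_cast; linarith)) j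
  have hej : poch (a + b - c + 1 - ((k+j:ℕ):ℝ) + (k:ℝ)) j ≠ 0 := by
    refine poch_ne_zero (fun z h => he (z + j - 1) ?_) j
    push_cast at h ⊢
    linarith
  rw [hsplitc, hsplite]
  rw [div_eq_div_iff (by apply_rules [mul_ne_zero]) (by apply_rules [mul_ne_zero])]
  ring

set_option maxHeartbeats 2000000 in
/-- The 2-balanced Saalschütz-type evaluation. -/
theorem saalschutz_two_balanced (m : ℕ) (hm : 0 < m) (a b c : ℝ)
    (ha : ∀ z : ℤ, a ≠ (z : ℝ)) (hb : ∀ z : ℤ, b ≠ (z : ℝ)) (hc : ∀ z : ℤ, c ≠ (z : ℝ))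
    (hac : ∀ z : ℤ, a - c ≠ (z : ℝ)) (hbc : ∀ z : ℤ, b - c ≠ (z : ℝ))
    (habc : ∀ z : ℤ, a + b - c ≠ (z : ℝ)) :
    ∑ k ∈ range (m + 1),
        poch (-(m : ℝ)) k * poch a k * poch b k /
          (poch c k * poch (a + b - (m : ℝ) - c + 2) k * (k.factorial : ℝ)) =
      Real.Gamma (a + b - (m : ℝ) - c + 2) * Real.Gamma ((m : ℝ) - 1 - b + c) *
          Real.Gamma (1 - c + a) * Real.Gamma c /
          (Real.Gamma (2 - (m : ℝ) - c + a) * Real.Gamma (b - c + a + 2) *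
            Real.Gamma ((m : ℝ) + c) * Real.Gamma (c - b)) *
        (-c ^ 2 + (-(m : ℝ) + b + a + 2) * c - (1 - (m : ℝ) + b) * a +
          ((m : ℝ) - 1) * (b + 1)) := by
  obtain ⟨n, rfl⟩ : ∃ n, m = n + 1 := ⟨m - 1, by omega⟩
  -- non-integrality facts
  have hD : ∀ z : ℤ, a + b - c + 1 - ((n:ℕ) : ℝ) ≠ (z : ℝ) := fun z h =>
    habc (z - 1 + n) (by push_cast; linarith)
  have hDm1 : ∀ z : ℤ, a + b - c - ((n:ℕ) : ℝ) ≠ (z : ℝ) := fun z h =>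
    habc (z + n) (by push_cast; linarith)
  have hDp1 : ∀ z : ℤ, a + b - c + 2 - ((n:ℕ) : ℝ) ≠ (z : ℝ) := fun z h =>
    habc (z - 2 + n) (by push_cast; linarith)
  have hc1 : ∀ z : ℤ, c + 1 ≠ (z : ℝ) := fun z h => hc (z - 1) (by push_cast; linarith)
  have habc1 : ∀ z : ℤ, (a+1) + (b+1) - (c+1) ≠ (z : ℝ) := fun z h =>
    habc (z - 1) (by push_cast; linarith)
  have hcb : ∀ z : ℤ, c - b ≠ (z : ℝ) := fun z h => hbc (-z) (by push_cast; linarith)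
  have hca : ∀ z : ℤ, c - a ≠ (z : ℝ) := fun z h => hac (-z) (by push_cast; linarith)
  have hE : ∀ z : ℤ, a - c + 1 - ((n:ℕ) : ℝ) ≠ (z : ℝ) := fun z h =>
    hac (z - 1 + n) (by push_cast; linarith)
  -- abbreviations for nonzero scalars
  have hcne : c ≠ 0 := fun h => hc 0 (by push_cast; linarith)
  have hDne : a + b - c + 1 - ((n:ℕ) : ℝ) ≠ 0 := fun h => hD 0 (by push_cast; linarith)
  have hDm1ne : a + b - c - ((n:ℕ) : ℝ) ≠ 0 := fun h => hDm1 0 (by push_cast; linarith)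
  have habcne : a + b - c + 1 ≠ 0 := fun h => habc (-1) (by push_cast; linarith)
  have hDm1ne' : a + b - c + 1 - ((n+1:ℕ) : ℝ) ≠ 0 := by
    intro h; apply hDm1ne; push_cast at h ⊢; linarith
  -- Step 1: the two Saalschütz evaluations
  have hT1 := saal_div a b c hc habc (n+1)
  have hT3 := saal_div (a+1) (b+1) (c+1) hc1 habc1 n
  -- Step 2: sum manipulation
  have hsum : ∑ k ∈ range (n + 1 + 1),
      poch (-((n+1 : ℕ) : ℝ)) k * poch a k * poch b k /
        (poch c k * poch (a + b - ((n+1:ℕ) : ℝ) - c + 2) k * (k.factorial : ℝ))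
      = (∑ k ∈ range (n+1+1),
          poch (-((n+1:ℕ) : ℝ)) k * poch a k * poch b k /
            (poch c k * poch (a + b - c + 1 - ((n+1:ℕ) : ℝ)) k * (k.factorial : ℝ)))
        + (((n:ℝ)+1) * a * b / ((a + b - c - (n:ℝ)) * c * (a + b - c + 1 - (n:ℝ)))) *
          ∑ j ∈ range (n+1),
            poch (-((n:ℕ) : ℝ)) j * poch (a+1) j * poch (b+1) j /
              (poch (c+1) j * poch ((a+1) + (b+1) - (c+1) + 1 - ((n:ℕ) : ℝ)) j * (j.factorial : ℝ)) := by
    have hDm1k : ∀ k : ℕ, a + b - c + 1 - ((n+1:ℕ) : ℝ) + k ≠ 0 := by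
      intro k h
      exact habc ((n:ℤ) - (k:ℤ)) (by push_cast at h ⊢; linarith)
    have hrel : ∀ k : ℕ, (a + b - c + 1 - ((n+1:ℕ) : ℝ)) * poch (a + b - ((n+1:ℕ) : ℝ) - c + 2) k
        = poch (a + b - c + 1 - ((n+1:ℕ) : ℝ)) k * (a + b - c + 1 - ((n+1:ℕ) : ℝ) + k) := by
      intro k
      rw [← poch_succ]
      rw [← poch_congr (show a + b - c + 1 - ((n+1:ℕ) : ℝ) + 1 = a + b - ((n+1:ℕ) : ℝ) - c + 2 from by
            push_cast; ring) k]
      rw [← poch_succ_left]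
    have hDm1val : ∀ k : ℕ, poch (a + b - c + 1 - ((n+1:ℕ) : ℝ)) k
        = (a + b - c + 1 - ((n+1:ℕ) : ℝ)) * poch (a + b - ((n+1:ℕ) : ℝ) - c + 2) k
            / (a + b - c + 1 - ((n+1:ℕ) : ℝ) + k) := by
      intro k
      rw [eq_div_iff (hDm1k k)]
      exact (hrel k).symm
    have hper : ∑ k ∈ range (n+1+1),
        poch (-((n+1:ℕ) : ℝ)) k * poch a k * poch b k /
          (poch c k * poch (a + b - c + 1 - ((n+1:ℕ) : ℝ)) k * (k.factorial : ℝ))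
        = ∑ k ∈ range (n+1+1),
          (poch (-((n+1:ℕ) : ℝ)) k * poch a k * poch b k /
            (poch c k * poch (a + b - ((n+1:ℕ) : ℝ) - c + 2) k * (k.factorial : ℝ))
          + ((k:ℝ) / (a + b - c - (n:ℝ))) *
            (poch (-((n+1:ℕ) : ℝ)) k * poch a k * poch b k /
              (poch c k * poch (a + b - ((n+1:ℕ) : ℝ) - c + 2) k * (k.factorial : ℝ)))) := by
      apply sum_congr rfl
      intro k _
      rw [hDm1val k]
      have h1 : poch c k ≠ 0 := poch_ne_zero hc k
      have h2 : poch (a + b - ((n+1:ℕ) : ℝ) - c + 2) k ≠ 0 := by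
        refine poch_ne_zero (fun z h => habc (z - 2 + ((n:ℤ)+1)) ?_) k
        push_cast at h ⊢
        linarith
      have h3 : (k.factorial : ℝ) ≠ 0 := by positivity
      have h4 := hDm1k k
      have h5 : a + b - c - (n:ℝ) ≠ 0 := hDm1ne
      have h6 : a + b - c + 1 - ((n+1:ℕ) : ℝ) ≠ 0 := hDm1ne'
      set A1 := poch (-((n+1:ℕ) : ℝ)) k
      set A2 := poch a k
      set A3 := poch b k
      set P := poch (a + b - ((n+1:ℕ) : ℝ) - c + 2) k
      set C := poch c k
      set F := (k.factorial : ℝ)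
      push_cast at h4 h6 ⊢
      field_simp
      ring
    have hshift : ∑ k ∈ range (n+1+1),
        ((k:ℝ) / (a + b - c - (n:ℝ))) *
          (poch (-((n+1:ℕ) : ℝ)) k * poch a k * poch b k /
            (poch c k * poch (a + b - ((n+1:ℕ) : ℝ) - c + 2) k * (k.factorial : ℝ)))
        = -((((n:ℝ)+1) * a * b / ((a + b - c - (n:ℝ)) * c * (a + b - c + 1 - (n:ℝ)))) *
          ∑ j ∈ range (n+1),
            poch (-((n:ℕ) : ℝ)) j * poch (a+1) j * poch (b+1) j /
              (poch (c+1) j * poch ((a+1) + (b+1) - (c+1) + 1 - ((n:ℕ) : ℝ)) j * (j.factorial : ℝ))) := by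
      rw [Finset.sum_range_succ' (fun k => ((k:ℝ) / (a + b - c - (n:ℝ))) *
          (poch (-((n+1:ℕ) : ℝ)) k * poch a k * poch b k /
            (poch c k * poch (a + b - ((n+1:ℕ) : ℝ) - c + 2) k * (k.factorial : ℝ)))) (n+1)]
      simp only [Nat.cast_zero, zero_div, zero_mul, add_zero]
      rw [Finset.mul_sum, ← Finset.sum_neg_distrib]
      apply sum_congr rfl
      intro j _
      rw [poch_succ_left (-((n+1:ℕ) : ℝ)) j, poch_succ_left a j, poch_succ_left b j,
          poch_succ_left c j, poch_succ_left (a + b - ((n+1:ℕ) : ℝ) - c + 2) j]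
      rw [poch_congr (show -((n+1:ℕ) : ℝ) + 1 = -((n:ℕ) : ℝ) from by push_cast; ring) j]
      rw [poch_congr (show a + b - ((n+1:ℕ) : ℝ) - c + 2 + 1 = (a+1) + (b+1) - (c+1) + 1 - ((n:ℕ) : ℝ) from by push_cast; ring) j]
      rw [Nat.factorial_succ]
      rw [show a + b - ((n+1:ℕ) : ℝ) - c + 2 = a + b - c + 1 - ((n:ℕ):ℝ) from by push_cast; ring]
      have h1 : poch (c+1) j ≠ 0 := poch_ne_zero hc1 j
      have h2 : poch ((a+1) + (b+1) - (c+1) + 1 - ((n:ℕ) : ℝ)) j ≠ 0 := by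
        refine poch_ne_zero (fun z h => habc (z - 2 + (n:ℤ)) ?_) j
        push_cast at h ⊢
        linarith
      have h3 : (j.factorial : ℝ) ≠ 0 := by positivity
      have h5 : a + b - c - (n:ℝ) ≠ 0 := hDm1ne
      have h6 : a + b - c + 1 - ((n:ℕ) : ℝ) ≠ 0 := hDne
      have h7 : ((j:ℝ) + 1) ≠ 0 := by positivity
      have h8 : (((j+1) * j.factorial : ℕ) : ℝ) ≠ 0 := by positivity
      set B1 := poch (-((n:ℕ) : ℝ)) j
      set B2 := poch (a+1) j
      set B3 := poch (b+1) j
      set B4 := poch (c+1) j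
      set B5 := poch ((a+1) + (b+1) - (c+1) + 1 - ((n:ℕ) : ℝ)) j
      set F := (j.factorial : ℝ)
      rw [div_mul_div_comm, div_mul_div_comm, ← neg_div]
      rw [div_eq_div_iff (by apply_rules [mul_ne_zero]) (by apply_rules [mul_ne_zero])]
      push_cast
      ring
    rw [hper, sum_add_distrib, hshift]
    ring
  rw [hsum, hT1, hT3]
  -- Step 3: Gamma rewrites
  rw [show b - c + a + 2 = (a + b - c + 1 - ((n:ℕ):ℝ)) + ((n+1:ℕ) : ℝ) from by push_cast; ring,
      gamma_poch hD (n+1)]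
  rw [show a + b - ((n+1:ℕ) : ℝ) - c + 2 = a + b - c + 1 - ((n:ℕ):ℝ) from by push_cast; ring]
  rw [show ((n+1:ℕ) : ℝ) - 1 - b + c = (c - b) + ((n:ℕ) : ℝ) from by push_cast; ring,
      gamma_poch hcb n]
  rw [show (1 : ℝ) - c + a = (a - c + 1 - ((n:ℕ):ℝ)) + ((n:ℕ) : ℝ) from by push_cast; ring,
      gamma_poch hE n]
  rw [show (2 : ℝ) - ((n+1:ℕ) : ℝ) - c + a = a - c + 1 - ((n:ℕ):ℝ) from by push_cast; ring]
  rw [show ((n+1:ℕ) : ℝ) + c = c + ((n+1:ℕ) : ℝ) from by ring, gamma_poch hc (n+1)]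
  -- reflect the E pochhammer
  rw [show poch (a - c + 1 - ((n:ℕ):ℝ)) n = (-1)^n * poch (c - a) n from by
    rw [poch_reflect (a - c + 1 - ((n:ℕ):ℝ)) n]
    exact congrArg _ (poch_congr (by push_cast; ring) n)]
  -- Step 4: reduce all pochhammers to length-n atoms
  rw [poch_succ (c - a) n, poch_succ (c - b) n]
  rw [poch_succ_left c n, poch_succ_left (a + b - c + 1 - ((n+1:ℕ) : ℝ)) n,
      poch_succ_left (a + b - c + 1 - ((n:ℕ) : ℝ)) n]
  rw [poch_congr (show a + b - c + 1 - ((n+1:ℕ) : ℝ) + 1 = a + b - c + 1 - ((n:ℕ):ℝ) from by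
        push_cast; ring) n]
  rw [poch_congr (show a + b - c + 1 - ((n:ℕ) : ℝ) + 1 = a + b - c + 2 - ((n:ℕ):ℝ) from by
        push_cast; ring) n]
  rw [poch_congr (show c + 1 - (a + 1) = c - a from by ring) n,
      poch_congr (show c + 1 - (b + 1) = c - b from by ring) n]
  rw [poch_congr (show (a+1) + (b+1) - (c+1) + 1 - ((n:ℕ) : ℝ) = a + b - c + 2 - ((n:ℕ):ℝ) from by
        push_cast; ring) n]
  -- relation between poch (a+b-c+1-n) n and poch (a+b-c+2-n) n
  have hD0 : poch (a + b - c + 1 - ((n:ℕ) : ℝ)) n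
      = (a + b - c + 1 - ((n:ℕ) : ℝ)) * poch (a + b - c + 2 - ((n:ℕ) : ℝ)) n / (a + b - c + 1) := by
    have h1 : poch (a + b - c + 1 - ((n:ℕ) : ℝ)) n * (a + b - c + 1 - ((n:ℕ) : ℝ) + n)
        = (a + b - c + 1 - ((n:ℕ) : ℝ)) * poch (a + b - c + 1 - ((n:ℕ) : ℝ) + 1) n := by
      rw [← poch_succ, ← poch_succ_left]
    rw [poch_congr (show a + b - c + 1 - ((n:ℕ) : ℝ) + 1 = a + b - c + 2 - ((n:ℕ):ℝ) from by
        push_cast; ring) n] at h1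
    have h2 : a + b - c + 1 - ((n:ℕ) : ℝ) + n = a + b - c + 1 := by ring
    rw [h2] at h1
    field_simp
    linarith
  rw [hD0]
  -- nonzero facts for final computation
  have hg1 : Real.Gamma (a + b - c + 1 - ((n:ℕ):ℝ)) ≠ 0 := gamma_ne_zero hD
  have hg2 : Real.Gamma (c - b) ≠ 0 := gamma_ne_zero hcb
  have hg3 : Real.Gamma (a - c + 1 - ((n:ℕ):ℝ)) ≠ 0 := gamma_ne_zero hE
  have hg4 : Real.Gamma c ≠ 0 := gamma_ne_zero hc
  have hp1 : poch (c+1) n ≠ 0 := poch_ne_zero hc1 n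
  have hp2 : poch (a + b - c + 2 - ((n:ℕ):ℝ)) n ≠ 0 := poch_ne_zero hDp1 n
  have hq1 : a + b - c + 1 - ((n:ℝ) + 1) ≠ 0 := by push_cast at hDm1ne'; exact hDm1ne'
  push_cast
  field_simp
  ring
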